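/- Let μ and (μ_n) be admissible Borel probability measures on the space Γ of lines of the plane such that μ_n converges weakly to μ. Then for every compact set K ⊆ ℝ² whose topological boundary ∂K satisfies area_μ(∂K) = 0, one has area_{μ_n}(K) → area_μ(K) as n → ∞. -/

import Mathlib

noncomputable section

open MeasureTheory Real

instance : MeasurableSpace Real.Angle :=
  inferInstanceAs (MeasurableSpace (AddCircle (2 * π)))

/-- The space `Γ = (ℝ/2πℤ) × ℝ` parameterizing the lines of the Euclidean plane. -/
abbrev LineSpace : Type := Real.Angle × ℝ

/-- The line `ℓ(θ, p) = {z : z₁ sin θ − z₂ cos θ = p}` corresponding to `(θ, p) ∈ Γ`. -/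
def lineOf (γ : LineSpace) : Set (ℝ × ℝ) :=
  {z : ℝ × ℝ | z.1 * γ.1.sin - z.2 * γ.1.cos = γ.2}

/-- `Γ_A`: the set of (parameters of) lines meeting a given subset `A` of the plane. -/
def linesMeeting (A : Set (ℝ × ℝ)) : Set LineSpace :=
  {γ : LineSpace | (lineOf γ ∩ A).Nonempty}

/-- A Borel measure `μ` on the space of lines is *admissible* if it is invariant under
the involution `(θ, p) ↦ (θ + π, −p)` reversing orientations, is finite on compact sets,
and gives measure zero to the set of lines through any given point of the plane. -/
def Admissible (μ : Measure LineSpace) : Prop :=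
  μ.map (fun γ : LineSpace => (γ.1 + ((π : ℝ) : Real.Angle), -γ.2)) = μ ∧
    (∀ K : Set LineSpace, IsCompact K → μ K < ⊤) ∧
    (∀ z : ℝ × ℝ, μ (linesMeeting {z}) = 0)

/-- The pseudo-distance `d_μ(x, y) = (1/4)·μ(Γ_{[x,y]})` induced by a measure `μ` on the
space of lines. -/
def lineDist (μ : Measure LineSpace) (x y : ℝ × ℝ) : ℝ :=
  (μ (linesMeeting (segment ℝ x y))).toReal / 4

/-- The area `area_μ(A) = (1/(8π))·(μ ⊗ μ)({pairs of distinct lines meeting inside A})`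
induced by a measure `μ` on the space of lines (the Santaló+Blaschke area). -/
def lineArea (μ : Measure LineSpace) (A : Set (ℝ × ℝ)) : ℝ :=
  ((μ.prod μ) {γ : LineSpace × LineSpace |
      lineOf γ.1 ≠ lineOf γ.2 ∧ (lineOf γ.1 ∩ lineOf γ.2 ∩ A).Nonempty}).toReal / (8 * π)

/-- Weak convergence of a sequence of measures: convergence of the integrals of all
bounded continuous functions. -/
def WeakTendsto (μs : ℕ → Measure LineSpace) (μ : Measure LineSpace) : Prop :=
  ∀ f : BoundedContinuousFunction LineSpace ℝ,
    Filter.Tendsto (fun n => ∫ γ, f γ ∂(μs n)) Filter.atTop (nhds (∫ γ, f γ ∂μ))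

-- ## instances
instance : Fact ((0:ℝ) < 2 * π) := ⟨by positivity⟩
instance : BorelSpace Real.Angle := inferInstanceAs (BorelSpace (AddCircle (2 * π)))
instance : CompactSpace Real.Angle := inferInstanceAs (CompactSpace (AddCircle (2 * π)))
instance : SecondCountableTopology Real.Angle :=
  inferInstanceAs (SecondCountableTopology (AddCircle (2 * π)))

namespace LineAreaAux

/-- the involution -/
def sig (γ : LineSpace) : LineSpace := (γ.1 + ((π : ℝ) : Real.Angle), -γ.2)

lemma continuous_sig : Continuous sig :=
  ((continuous_fst.add continuous_const)).prodMk continuous_snd.neg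

lemma mem_lineOf {z : ℝ × ℝ} {γ : LineSpace} :
    z ∈ lineOf γ ↔ z.1 * γ.1.sin - z.2 * γ.1.cos = γ.2 := Iff.rfl

lemma lineOf_sig (γ : LineSpace) : lineOf (sig γ) = lineOf γ := by
  ext z
  simp only [mem_lineOf, sig, Real.Angle.sin_add_pi, Real.Angle.cos_add_pi]
  constructor <;> intro h <;> linarith

lemma unitsc (θ : Real.Angle) : θ.cos ^ 2 + θ.sin ^ 2 = 1 := Real.Angle.cos_sq_add_sin_sq θ

lemma abs_sin_le_one (θ : Real.Angle) : |θ.sin| ≤ 1 := by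
  nlinarith [unitsc θ, sq_abs θ.sin, sq_nonneg θ.cos, abs_nonneg θ.sin]

lemma abs_cos_le_one (θ : Real.Angle) : |θ.cos| ≤ 1 := by
  nlinarith [unitsc θ, sq_abs θ.cos, sq_nonneg θ.sin, abs_nonneg θ.cos]

lemma angle_eq_or {θ₁ θ₂ : Real.Angle} (h : θ₁.sin * θ₂.cos - θ₁.cos * θ₂.sin = 0) :
    θ₂ = θ₁ ∨ θ₂ = θ₁ + ((π : ℝ) : Real.Angle) := by
  have hs : (θ₁ - θ₂).sin = 0 := by
    have h2 := Real.Angle.sin_add θ₁ (-θ₂)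
    rw [Real.Angle.sin_neg, Real.Angle.cos_neg] at h2
    rw [sub_eq_add_neg, h2]; linarith
  rcases Real.Angle.sin_eq_zero_iff.1 hs with h0 | hpi
  · left
    have := sub_eq_zero.mp h0
    exact this.symm
  · right
    have h2 : θ₂ = θ₁ - ((π : ℝ) : Real.Angle) := by
      have : θ₁ - (θ₁ - θ₂) = θ₂ := by abel
      rw [← this, hpi]
    rw [h2, Real.Angle.sub_coe_pi_eq_add_coe_pi]

lemma lineOf_eq_iff {γ₁ γ₂ : LineSpace} :
    lineOf γ₁ = lineOf γ₂ ↔ γ₂ = γ₁ ∨ γ₂ = sig γ₁ := by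
  constructor
  · intro h
    have h1 : (γ₁.2 * γ₁.1.sin, -(γ₁.2 * γ₁.1.cos)) ∈ lineOf γ₁ := by
      rw [mem_lineOf]; dsimp only; linear_combination γ₁.2 * unitsc γ₁.1
    have h2 : (γ₁.2 * γ₁.1.sin + γ₁.1.cos, -(γ₁.2 * γ₁.1.cos) + γ₁.1.sin) ∈ lineOf γ₁ := by
      rw [mem_lineOf]; dsimp only; linear_combination γ₁.2 * unitsc γ₁.1
    rw [h] at h1 h2
    rw [mem_lineOf] at h1 h2
    dsimp only at h1 h2
    have hperp : γ₁.1.sin * γ₂.1.cos - γ₁.1.cos * γ₂.1.sin = 0 := by linear_combination h1 - h2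
    rcases angle_eq_or hperp with ha | ha
    · left
      have hs : γ₂.1.sin = γ₁.1.sin := by rw [ha]
      have hc : γ₂.1.cos = γ₁.1.cos := by rw [ha]
      have : γ₂.2 = γ₁.2 := by rw [hs, hc] at h1; linear_combination γ₁.2 * unitsc γ₁.1 - h1
      exact Prod.ext ha this
    · right
      have hs : γ₂.1.sin = -γ₁.1.sin := by rw [ha, Real.Angle.sin_add_pi]
      have hc : γ₂.1.cos = -γ₁.1.cos := by rw [ha, Real.Angle.cos_add_pi]
      have : γ₂.2 = -γ₁.2 := by rw [hs, hc] at h1; linear_combination -γ₁.2 * unitsc γ₁.1 - h1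
      exact Prod.ext ha this
  · rintro (rfl | rfl)
    · rfl
    · exact (lineOf_sig γ₁).symm

/-- pairs of parameters defining the same line -/
def Dset : Set (LineSpace × LineSpace) := {x | x.2 = x.1 ∨ x.2 = sig x.1}

lemma mem_Dset_iff {x : LineSpace × LineSpace} : x ∈ Dset ↔ lineOf x.1 = lineOf x.2 :=
  (lineOf_eq_iff).symm

lemma isClosed_Dset : IsClosed Dset := by
  have h1 : IsClosed {x : LineSpace × LineSpace | x.2 = x.1} :=
    isClosed_eq continuous_snd continuous_fst
  have h2 : IsClosed {x : LineSpace × LineSpace | x.2 = sig x.1} :=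
    isClosed_eq continuous_snd (continuous_sig.comp continuous_fst)
  exact h1.union h2

/-- determinant of the pair of line equations -/
def detf (x : LineSpace × LineSpace) : ℝ := x.1.1.cos * x.2.1.sin - x.1.1.sin * x.2.1.cos

lemma continuous_sinf : Continuous (fun γ : LineSpace => γ.1.sin) :=
  Real.Angle.continuous_sin.comp continuous_fst

lemma continuous_cosf : Continuous (fun γ : LineSpace => γ.1.cos) :=
  Real.Angle.continuous_cos.comp continuous_fst

lemma continuous_detf : Continuous detf :=
  ((continuous_cosf.comp continuous_fst).mul (continuous_sinf.comp continuous_snd)).sub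
    ((continuous_sinf.comp continuous_fst).mul (continuous_cosf.comp continuous_snd))

/-- intersection point of the two lines (Cramer) -/
def interPt (x : LineSpace × LineSpace) : ℝ × ℝ :=
  ((x.1.1.cos * x.2.2 - x.2.1.cos * x.1.2) / detf x,
   (x.1.1.sin * x.2.2 - x.2.1.sin * x.1.2) / detf x)

lemma detf_ne_of {x : LineSpace × LineSpace} (h : lineOf x.1 ≠ lineOf x.2)
    {z : ℝ × ℝ} (hz1 : z ∈ lineOf x.1) (hz2 : z ∈ lineOf x.2) : detf x ≠ 0 := by
  intro h0
  rw [mem_lineOf] at hz1 hz2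
  have hperp : x.1.1.sin * x.2.1.cos - x.1.1.cos * x.2.1.sin = 0 := by
    simp only [detf] at h0; linarith
  rcases angle_eq_or hperp with ha | ha
  · have hs : x.2.1.sin = x.1.1.sin := by rw [ha]
    have hc : x.2.1.cos = x.1.1.cos := by rw [ha]
    have hp : x.2.2 = x.1.2 := by rw [hs, hc] at hz2; linarith
    exact h (lineOf_eq_iff.mpr (Or.inl (Prod.ext ha hp)))
  · have hs : x.2.1.sin = -x.1.1.sin := by rw [ha, Real.Angle.sin_add_pi]
    have hc : x.2.1.cos = -x.1.1.cos := by rw [ha, Real.Angle.cos_add_pi]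
    have hp : x.2.2 = -x.1.2 := by rw [hs, hc] at hz2; linarith
    exact h (lineOf_eq_iff.mpr (Or.inr (Prod.ext ha hp)))

lemma interPt_mem {x : LineSpace × LineSpace} (hdet : detf x ≠ 0) :
    interPt x ∈ lineOf x.1 ∧ interPt x ∈ lineOf x.2 := by
  constructor <;>
  · rw [mem_lineOf]
    simp only [interPt]
    field_simp
    simp only [detf]
    ring

lemma interPt_eq {x : LineSpace × LineSpace} (hdet : detf x ≠ 0)
    {z : ℝ × ℝ} (hz1 : z ∈ lineOf x.1) (hz2 : z ∈ lineOf x.2) : interPt x = z := by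
  rw [mem_lineOf] at hz1 hz2
  have hd : detf x = x.1.1.cos * x.2.1.sin - x.1.1.sin * x.2.1.cos := rfl
  have e1 : (x.1.1.cos * x.2.2 - x.2.1.cos * x.1.2) / detf x = z.1 := by
    rw [div_eq_iff hdet, hd]; linear_combination x.2.1.cos * hz1 - x.1.1.cos * hz2
  have e2 : (x.1.1.sin * x.2.2 - x.2.1.sin * x.1.2) / detf x = z.2 := by
    rw [div_eq_iff hdet, hd]; linear_combination x.2.1.sin * hz1 - x.1.1.sin * hz2
  exact Prod.ext e1 e2

/-- pairs of lines both meeting A -/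
def Mset (A : Set (ℝ × ℝ)) : Set (LineSpace × LineSpace) :=
  {x | (lineOf x.1 ∩ lineOf x.2 ∩ A).Nonempty}

/-- pairs of distinct lines meeting inside A -/
def pairSet (A : Set (ℝ × ℝ)) : Set (LineSpace × LineSpace) :=
  {x | lineOf x.1 ≠ lineOf x.2 ∧ (lineOf x.1 ∩ lineOf x.2 ∩ A).Nonempty}

lemma continuous_eval (i : Bool) :
    Continuous (fun q : (ℝ × ℝ) × (LineSpace × LineSpace) =>
      q.1.1 * (if i then q.2.1 else q.2.2).1.sin - q.1.2 * (if i then q.2.1 else q.2.2).1.cos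
        - (if i then q.2.1 else q.2.2).2) := by
  cases i <;> simp only [if_true, if_false, Bool.false_eq_true] <;>
  · apply Continuous.sub
    apply Continuous.sub
    · exact (continuous_fst.fst).mul ((continuous_sinf).comp (by fun_prop))
    · exact (continuous_fst.snd).mul ((continuous_cosf).comp (by fun_prop))
    · fun_prop

lemma isClosed_Mset {K : Set (ℝ × ℝ)} (hK : IsCompact K) : IsClosed (Mset K) := by
  haveI : CompactSpace ↥K := isCompact_iff_compactSpace.mp hK
  have himg : Mset K = Prod.snd ''
      {q : ↥K × (LineSpace × LineSpace) | (q.1 : ℝ × ℝ) ∈ lineOf q.2.1 ∧ (q.1 : ℝ × ℝ) ∈ lineOf q.2.2} := by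
    ext x
    constructor
    · rintro ⟨z, ⟨⟨hz1, hz2⟩, hzK⟩⟩
      exact ⟨(⟨z, hzK⟩, x), ⟨hz1, hz2⟩, rfl⟩
    · rintro ⟨⟨z, y⟩, ⟨h1, h2⟩, rfl⟩
      exact ⟨z, ⟨⟨h1, h2⟩, z.2⟩⟩
  rw [himg]
  apply isClosedMap_snd_of_compactSpace
  have c1 : Continuous (fun q : ↥K × (LineSpace × LineSpace) => ((q.1 : ℝ × ℝ), q.2)) :=
    (continuous_subtype_val.comp continuous_fst).prodMk continuous_snd
  have h1 : IsClosed {q : (ℝ × ℝ) × (LineSpace × LineSpace) | q.1 ∈ lineOf q.2.1} := by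
    have : {q : (ℝ × ℝ) × (LineSpace × LineSpace) | q.1 ∈ lineOf q.2.1} =
        {q | q.1.1 * q.2.1.1.sin - q.1.2 * q.2.1.1.cos - q.2.1.2 = 0} := by
      ext q; simp [mem_lineOf, sub_eq_zero]
    rw [this]
    exact isClosed_eq (by simpa using continuous_eval true) continuous_const
  have h2 : IsClosed {q : (ℝ × ℝ) × (LineSpace × LineSpace) | q.1 ∈ lineOf q.2.2} := by
    have : {q : (ℝ × ℝ) × (LineSpace × LineSpace) | q.1 ∈ lineOf q.2.2} =
        {q | q.1.1 * q.2.2.1.sin - q.1.2 * q.2.2.1.cos - q.2.2.2 = 0} := by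
      ext q; simp [mem_lineOf, sub_eq_zero]
    rw [this]
    exact isClosed_eq (by simpa using continuous_eval false) continuous_const
  exact (h1.inter h2).preimage c1

lemma isClosed_linesMeeting {K : Set (ℝ × ℝ)} (hK : IsCompact K) : IsClosed (linesMeeting K) := by
  haveI : CompactSpace ↥K := isCompact_iff_compactSpace.mp hK
  have himg : linesMeeting K = Prod.snd ''
      {q : ↥K × LineSpace | (q.1 : ℝ × ℝ) ∈ lineOf q.2} := by
    ext x
    constructor
    · rintro ⟨z, hz1, hzK⟩
      exact ⟨(⟨z, hzK⟩, x), hz1, rfl⟩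
    · rintro ⟨⟨z, y⟩, h1, rfl⟩
      exact ⟨z, h1, z.2⟩
  rw [himg]
  apply isClosedMap_snd_of_compactSpace
  have : {q : ↥K × LineSpace | (q.1 : ℝ × ℝ) ∈ lineOf q.2} =
      {q : ↥K × LineSpace | (q.1 : ℝ × ℝ).1 * q.2.1.sin - (q.1 : ℝ × ℝ).2 * q.2.1.cos = q.2.2} :=
    rfl
  rw [this]
  apply isClosed_eq
  · apply Continuous.sub
    · exact ((continuous_subtype_val.comp continuous_fst).fst).mul
        (continuous_sinf.comp continuous_snd)
    · exact ((continuous_subtype_val.comp continuous_fst).snd).mul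
        (continuous_cosf.comp continuous_snd)
  · exact continuous_snd.snd

lemma isCompact_linesMeeting {K : Set (ℝ × ℝ)} (hK : IsCompact K) :
    IsCompact (linesMeeting K) := by
  obtain ⟨R, hR⟩ := hK.isBounded.subset_closedBall 0
  apply IsCompact.of_isClosed_subset (isCompact_univ.prod (isCompact_Icc (a := -(R + R)) (b := R + R)))
    (isClosed_linesMeeting hK)
  rintro γ ⟨z, hz, hzK⟩
  have hz' := hR hzK
  rw [Metric.mem_closedBall, dist_zero_right, Prod.norm_def] at hz'
  have h1 : |z.1| ≤ R := le_trans (le_max_left _ _) hz'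
  have h2 : |z.2| ≤ R := le_trans (le_max_right _ _) hz'
  constructor
  · trivial
  · rw [Set.mem_Icc, ← abs_le]
    rw [mem_lineOf] at hz
    calc |γ.2| = |z.1 * γ.1.sin - z.2 * γ.1.cos| := by rw [hz]
    _ ≤ |z.1 * γ.1.sin| + |z.2 * γ.1.cos| := abs_sub _ _
    _ = |z.1| * |γ.1.sin| + |z.2| * |γ.1.cos| := by rw [abs_mul, abs_mul]
    _ ≤ R * 1 + R * 1 :=
        add_le_add
          (mul_le_mul h1 (abs_sin_le_one _) (abs_nonneg _) ((abs_nonneg z.1).trans h1))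
          (mul_le_mul h2 (abs_cos_le_one _) (abs_nonneg _) ((abs_nonneg z.2).trans h2))
    _ = R + R := by ring

lemma pairSet_subset_prod {K : Set (ℝ × ℝ)} :
    pairSet K ⊆ (linesMeeting K) ×ˢ (linesMeeting K) := by
  rintro x ⟨_, z, ⟨hz1, hz2⟩, hzK⟩
  exact ⟨⟨z, hz1, hzK⟩, ⟨z, hz2, hzK⟩⟩

lemma mem_interior_pairSet {K : Set (ℝ × ℝ)} {x : LineSpace × LineSpace}
    (hne : lineOf x.1 ≠ lineOf x.2) {z : ℝ × ℝ} (hz1 : z ∈ lineOf x.1) (hz2 : z ∈ lineOf x.2)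
    (hzK : z ∈ interior K) : x ∈ interior (pairSet K) := by
  set U : Set (LineSpace × LineSpace) :=
    Dsetᶜ ∩ ({y | detf y ≠ 0} ∩ interPt ⁻¹' (interior K)) with hU
  have hVopen : IsOpen {y : LineSpace × LineSpace | detf y ≠ 0} :=
    isOpen_ne.preimage continuous_detf
  have hinterCont : ContinuousOn interPt {y | detf y ≠ 0} := by
    apply ContinuousOn.prodMk
    · exact ContinuousOn.div
        (((continuous_cosf.comp continuous_fst).mul continuous_snd.snd).sub
          ((continuous_cosf.comp continuous_snd).mul continuous_fst.snd)).continuousOn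
        continuous_detf.continuousOn fun y hy => hy
    · exact ContinuousOn.div
        (((continuous_sinf.comp continuous_fst).mul continuous_snd.snd).sub
          ((continuous_sinf.comp continuous_snd).mul continuous_fst.snd)).continuousOn
        continuous_detf.continuousOn fun y hy => hy
  have hUopen : IsOpen U :=
    (isClosed_Dset.isOpen_compl).inter
      (hinterCont.isOpen_inter_preimage hVopen isOpen_interior)
  have hdet : detf x ≠ 0 := detf_ne_of hne hz1 hz2
  have hxU : x ∈ U := by
    refine ⟨fun hD => hne (mem_Dset_iff.mp hD), hdet, ?_⟩
    have := interPt_eq hdet hz1 hz2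
    simp only [Set.mem_preimage, this]
    exact hzK
  have hUsub : U ⊆ pairSet K := by
    rintro y ⟨hyD, hydet, hyK⟩
    refine ⟨fun h => hyD (mem_Dset_iff.mpr h), interPt y, ⟨(interPt_mem hydet).1, (interPt_mem hydet).2⟩, ?_⟩
    exact interior_subset hyK
  exact (interior_maximal hUsub hUopen) hxU

lemma frontier_pairSet_subset {K : Set (ℝ × ℝ)} (hK : IsCompact K) :
    frontier (pairSet K) ⊆ Dset ∪ pairSet (frontier K) := by
  intro x hx
  have hxc : x ∈ Mset K ∪ Dset := by
    have hsub : pairSet K ⊆ Mset K ∪ Dset := fun y hy => Or.inl hy.2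
    have := closure_minimal hsub ((isClosed_Mset hK).union isClosed_Dset)
    exact this hx.1
  by_cases hD : x ∈ Dset
  · exact Or.inl hD
  right
  have hne : lineOf x.1 ≠ lineOf x.2 := fun h => hD (mem_Dset_iff.mpr h)
  have hxM : x ∈ Mset K := by
    rcases hxc with h | h
    · exact h
    · exact absurd h hD
  obtain ⟨z, ⟨hz1, hz2⟩, hzK⟩ := hxM
  have hzi : z ∉ interior K := fun hzi => hx.2 (mem_interior_pairSet hne hz1 hz2 hzi)
  exact ⟨hne, z, ⟨hz1, hz2⟩, subset_closure hzK, hzi⟩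

lemma exists_mem_lineOf (γ : LineSpace) : ∃ z : ℝ × ℝ, z ∈ lineOf γ := by
  by_cases hs : γ.1.sin = 0
  · have hc : γ.1.cos ≠ 0 := by
      intro hc; have := unitsc γ.1; rw [hs, hc] at this; norm_num at this
    exact ⟨(0, -γ.2 / γ.1.cos), by rw [mem_lineOf]; field_simp; ring⟩
  · exact ⟨(γ.2 / γ.1.sin, 0), by rw [mem_lineOf]; field_simp; ring⟩

lemma atomless {ν : Measure LineSpace} (hν : Admissible ν) (γ : LineSpace) : ν {γ} = 0 := by
  obtain ⟨z, hz⟩ := exists_mem_lineOf γ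
  apply measure_mono_null _ (hν.2.2 z)
  intro γ' hγ'
  rw [Set.mem_singleton_iff] at hγ'
  subst hγ'
  exact ⟨z, hz, rfl⟩

lemma prod_Dset_null {ν : Measure LineSpace} [IsProbabilityMeasure ν] (hν : Admissible ν) :
    ν.prod ν Dset = 0 := by
  have hD : MeasurableSet Dset := isClosed_Dset.measurableSet
  rw [MeasureTheory.Measure.prod_apply hD]
  have hz : ∀ a : LineSpace, ν (Prod.mk a ⁻¹' Dset) = 0 := by
    intro a
    have hsub : Prod.mk a ⁻¹' Dset ⊆ ({a} ∪ {sig a} : Set LineSpace) := by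
      rintro b (hb | hb)
      · exact Or.inl hb
      · exact Or.inr hb
    exact measure_mono_null hsub (measure_union_null (atomless hν a) (atomless hν (sig a)))
  simp only [hz]
  simp

lemma pairSet_null_of_lineArea_zero {ν : Measure LineSpace} [IsProbabilityMeasure ν]
    {A : Set (ℝ × ℝ)} (h : lineArea ν A = 0) : ν.prod ν (pairSet A) = 0 := by
  have : lineArea ν A = ((ν.prod ν) (pairSet A)).toReal / (8 * π) := rfl
  rw [this] at h
  have h8 : (8 : ℝ) * π ≠ 0 := by positivity
  have htr : ((ν.prod ν) (pairSet A)).toReal = 0 := by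
    field_simp at h
    simpa using h
  rcases (ENNReal.toReal_eq_zero_iff _).mp htr with h0 | htop
  · exact h0
  · exact absurd htop (measure_ne_top _ _)

open Filter in
lemma integral_dist_le (ν : Measure LineSpace) [IsProbabilityMeasure ν]
    (h₁ h₂ : BoundedContinuousFunction LineSpace ℝ) :
    |∫ x, h₁ x ∂ν - ∫ x, h₂ x ∂ν| ≤ dist h₁ h₂ := by
  rw [← integral_sub (h₁.integrable ν) (h₂.integrable ν)]
  have hb : ∀ᵐ x ∂ν, ‖h₁ x - h₂ x‖ ≤ dist h₁ h₂ :=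
    Filter.Eventually.of_forall fun x => by
      rw [Real.norm_eq_abs, ← Real.dist_eq]
      exact BoundedContinuousFunction.dist_coe_le_dist x
  have hnorm := norm_integral_le_of_norm_le_const (μ := ν) hb
  simpa [Real.norm_eq_abs, measure_univ] using hnorm

open Filter in
lemma tendsto_integral_prod
    (μ : Measure LineSpace) (μs : ℕ → Measure LineSpace)
    [IsProbabilityMeasure μ] [∀ n, IsProbabilityMeasure (μs n)]
    (hconv : WeakTendsto μs μ)
    (f : LineSpace × LineSpace → ℝ) (hf : Continuous f) (hsupp : HasCompactSupport f) :
    Tendsto (fun n => ∫ z, f z ∂((μs n).prod (μs n))) atTop (nhds (∫ z, f z ∂(μ.prod μ))) := by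
  obtain ⟨x₀, hx₀⟩ := (hf.norm).exists_forall_ge_of_hasCompactSupport hsupp.norm
  set C := ‖f x₀‖ with hCdef
  have hC0 : 0 ≤ C := norm_nonneg _
  have huc : UniformContinuous f := hsupp.uniformContinuous_of_continuous hf
  have hbd : ∀ x : LineSpace, ∀ y, ‖f (x, y)‖ ≤ C := fun x y => hx₀ (x, y)
  set Φ : LineSpace → BoundedContinuousFunction LineSpace ℝ := fun x =>
    BoundedContinuousFunction.ofNormedAddCommGroup (fun y => f (x, y))
      (hf.comp (continuous_const.prodMk continuous_id)) C (hbd x) with hΦdef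
  have hΦapp : ∀ x y, Φ x y = f (x, y) := fun x y => rfl
  have hΦcont : Continuous Φ := by
    rw [Metric.continuous_iff]
    intro x ε hε
    obtain ⟨δ, hδ, hδ'⟩ := Metric.uniformContinuous_iff.mp huc (ε / 2) (half_pos hε)
    refine ⟨δ, hδ, fun x' hx' => ?_⟩
    have hle : dist (Φ x') (Φ x) ≤ ε / 2 := by
      rw [BoundedContinuousFunction.dist_le (le_of_lt (half_pos hε))]
      intro y
      have hdy : dist ((x', y) : LineSpace × LineSpace) ((x, y) : LineSpace × LineSpace) < δ := by
        rw [Prod.dist_eq]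
        simp only [dist_self]
        rw [max_eq_left dist_nonneg]
        exact hx'
      simpa [hΦapp] using le_of_lt (hδ' hdy)
    linarith
  have hIFbd : ∀ (ν : Measure LineSpace) [IsProbabilityMeasure ν] (x : LineSpace),
      ‖∫ y, f (x, y) ∂ν‖ ≤ C := by
    intro ν _ x
    have hnorm := norm_integral_le_of_norm_le_const (μ := ν)
      (Filter.Eventually.of_forall (hbd x))
    simpa [measure_univ] using hnorm
  have hlip : ∀ (ν : Measure LineSpace) [IsProbabilityMeasure ν],
      LipschitzWith 1 (fun h : BoundedContinuousFunction LineSpace ℝ => ∫ y, h y ∂ν) := by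
    intro ν _
    apply LipschitzWith.of_dist_le_mul
    intro h₁ h₂
    rw [Real.dist_eq, NNReal.coe_one, one_mul]
    exact integral_dist_le ν h₁ h₂
  have hIFcont : ∀ (ν : Measure LineSpace) [IsProbabilityMeasure ν],
      Continuous (fun x => ∫ y, f (x, y) ∂ν) := by
    intro ν _
    have hcomp : (fun x => ∫ y, f (x, y) ∂ν)
        = (fun h : BoundedContinuousFunction LineSpace ℝ => ∫ y, h y ∂ν) ∘ Φ := rfl
    rw [hcomp]
    exact ((hlip ν).continuous).comp hΦcont
  have mkG : ∀ (ν : Measure LineSpace) [IsProbabilityMeasure ν],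
      { g : BoundedContinuousFunction LineSpace ℝ // ∀ x, g x = ∫ y, f (x, y) ∂ν } :=
    fun ν _ =>
      ⟨BoundedContinuousFunction.ofNormedAddCommGroup _ (hIFcont ν) C (hIFbd ν),
        fun x => rfl⟩
  obtain ⟨Gμ, hGμ⟩ := mkG μ
  have hfub : ∀ (ν : Measure LineSpace) [IsProbabilityMeasure ν],
      ∫ z, f z ∂(ν.prod ν) = ∫ x, ∫ y, f (x, y) ∂ν ∂ν := by
    intro ν _
    exact MeasureTheory.integral_prod f (hf.integrable_of_hasCompactSupport hsupp)
  have hA : IsCompact ((Φ '' (Prod.fst '' tsupport f)) ∪ {0}) :=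
    ((hsupp.image continuous_fst).image hΦcont).union isCompact_singleton
  have hrange : ∀ x, Φ x ∈ (Φ '' (Prod.fst '' tsupport f)) ∪ {0} := by
    intro x
    by_cases hx : x ∈ Prod.fst '' tsupport f
    · exact Or.inl ⟨x, hx, rfl⟩
    · right
      have hzero : ∀ y, f (x, y) = 0 := fun y => by
        by_contra hy
        exact hx ⟨(x, y), subset_tsupport f hy, rfl⟩
      have hΦ0 : Φ x = 0 := by
        ext y
        simp [hΦapp, hzero y]
      simp [hΦ0]
  rw [Metric.tendsto_atTop]
  intro ε hε
  have hε'0 : 0 < ε / 5 := by positivity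
  obtain ⟨t, hts, htfin, htcov⟩ := hA.finite_cover_balls hε'0
  have hev1 : ∀ h : BoundedContinuousFunction LineSpace ℝ,
      ∀ᶠ n in atTop, |(∫ y, h y ∂(μs n)) - ∫ y, h y ∂μ| < ε / 5 := by
    intro h
    obtain ⟨N, hN⟩ := Metric.tendsto_atTop.mp (hconv h) (ε / 5) hε'0
    refine Filter.eventually_atTop.mpr ⟨N, fun n hn => ?_⟩
    have hd := hN n hn
    rwa [Real.dist_eq] at hd
  have hev := ((htfin.eventually_all).mpr fun h _ => hev1 h).and (hev1 Gμ)
  obtain ⟨N, hN⟩ := Filter.eventually_atTop.mp hev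
  refine ⟨N, fun n hn => ?_⟩
  obtain ⟨hnet, hGev⟩ := hN n hn
  obtain ⟨Gn, hGn⟩ := mkG (μs n)
  have hpt : ∀ x, ‖(∫ y, f (x, y) ∂(μs n)) - ∫ y, f (x, y) ∂μ‖ ≤ 3 * (ε / 5) := by
    intro x
    obtain ⟨h, hht, hxball⟩ := Set.mem_iUnion₂.mp (htcov (hrange x))
    rw [Metric.mem_ball] at hxball
    have e1 : |(∫ y, f (x, y) ∂(μs n)) - ∫ y, h y ∂(μs n)| ≤ ε / 5 :=
      le_trans (integral_dist_le (μs n) (Φ x) h) hxball.le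
    have e3 : |(∫ y, h y ∂μ) - ∫ y, f (x, y) ∂μ| ≤ ε / 5 := by
      have hc := integral_dist_le μ h (Φ x)
      rw [dist_comm] at hc
      exact le_trans hc hxball.le
    have e2 := hnet h hht
    rw [Real.norm_eq_abs]
    have t1 := abs_sub_le (∫ y, f (x, y) ∂(μs n)) (∫ y, h y ∂(μs n)) (∫ y, f (x, y) ∂μ)
    have t2 := abs_sub_le (∫ y, h y ∂(μs n)) (∫ y, h y ∂μ) (∫ y, f (x, y) ∂μ)
    linarith
  have hi1 : Integrable (fun x => ∫ y, f (x, y) ∂(μs n)) (μs n) := by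
    have hfe : (fun x => ∫ y, f (x, y) ∂(μs n)) = ⇑Gn := by
      funext x; exact (hGn x).symm
    rw [hfe]; exact Gn.integrable _
  have hi2 : Integrable (fun x => ∫ y, f (x, y) ∂μ) (μs n) := by
    have hfe : (fun x => ∫ y, f (x, y) ∂μ) = ⇑Gμ := by
      funext x; exact (hGμ x).symm
    rw [hfe]; exact Gμ.integrable _
  rw [Real.dist_eq, hfub (μs n), hfub μ]
  have hsplit : (∫ x, ∫ y, f (x, y) ∂(μs n) ∂(μs n)) - ∫ x, ∫ y, f (x, y) ∂μ ∂μ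
      = (∫ x, ((∫ y, f (x, y) ∂(μs n)) - ∫ y, f (x, y) ∂μ) ∂(μs n))
        + ((∫ x, ∫ y, f (x, y) ∂μ ∂(μs n)) - ∫ x, ∫ y, f (x, y) ∂μ ∂μ) := by
    rw [integral_sub hi1 hi2]; ring
  rw [hsplit]
  have h1 : |∫ x, ((∫ y, f (x, y) ∂(μs n)) - ∫ y, f (x, y) ∂μ) ∂(μs n)| ≤ 3 * (ε / 5) := by
    have hnorm := norm_integral_le_of_norm_le_const (μ := μs n)
      (Filter.Eventually.of_forall hpt)
    simpa [Real.norm_eq_abs, measure_univ] using hnorm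
  have h2 : |(∫ x, ∫ y, f (x, y) ∂μ ∂(μs n)) - ∫ x, ∫ y, f (x, y) ∂μ ∂μ| < ε / 5 := by
    have hfe : ∀ ν' : Measure LineSpace, (∫ x, Gμ x ∂ν') = ∫ x, ∫ y, f (x, y) ∂μ ∂ν' := by
      intro ν'; congr 1; funext x; exact hGμ x
    rw [← hfe, ← hfe]
    exact hGev
  calc |(∫ x, ((∫ y, f (x, y) ∂(μs n)) - ∫ y, f (x, y) ∂μ) ∂(μs n))
        + ((∫ x, ∫ y, f (x, y) ∂μ ∂(μs n)) - ∫ x, ∫ y, f (x, y) ∂μ ∂μ)|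
      ≤ |∫ x, ((∫ y, f (x, y) ∂(μs n)) - ∫ y, f (x, y) ∂μ) ∂(μs n)|
        + |(∫ x, ∫ y, f (x, y) ∂μ ∂(μs n)) - ∫ x, ∫ y, f (x, y) ∂μ ∂μ| := abs_add_le _ _
  _ < ε := by linarith

section Urysohn

variable {E W : Set (LineSpace × LineSpace)} {δ : ℝ} {x : LineSpace × LineSpace}

def upf (E : Set (LineSpace × LineSpace)) (δ : ℝ) : (LineSpace × LineSpace) → ℝ :=
  fun x => max 0 (1 - Metric.infDist x E / δ)

def lowf (W : Set (LineSpace × LineSpace)) (δ : ℝ) : (LineSpace × LineSpace) → ℝ :=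
  fun x => min 1 (Metric.infDist x W / δ)

lemma upf_cont : Continuous (upf E δ) :=
  continuous_const.max (continuous_const.sub ((Metric.continuous_infDist_pt E).div_const δ))

lemma lowf_cont : Continuous (lowf W δ) :=
  continuous_const.min ((Metric.continuous_infDist_pt W).div_const δ)

lemma upf_nonneg : 0 ≤ upf E δ x := le_max_left _ _

lemma upf_le_one (hδ : 0 < δ) : upf E δ x ≤ 1 :=
  max_le zero_le_one (by
    have := Metric.infDist_nonneg (x := x) (s := E)
    have h2 : 0 ≤ Metric.infDist x E / δ := div_nonneg this hδ.le
    linarith)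

lemma upf_one (hx : x ∈ E) : upf E δ x = 1 := by
  simp [upf, Metric.infDist_zero_of_mem hx]

lemma upf_zero_outside (hδ : 0 < δ) (hE : E.Nonempty) (hx : x ∉ Metric.cthickening δ E) :
    upf E δ x = 0 := by
  have hd : δ ≤ Metric.infDist x E := by
    by_contra hlt
    push_neg at hlt
    obtain ⟨y, hy, hdy⟩ := (Metric.infDist_lt_iff hE).mp hlt
    exact hx (Metric.mem_cthickening_of_dist_le x y δ E hy hdy.le)
  have : 1 - Metric.infDist x E / δ ≤ 0 := by
    rw [sub_nonpos, le_div_iff₀ hδ, one_mul]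
    exact hd
  simp [upf, max_eq_left this]

lemma lowf_nonneg (hδ : 0 < δ) : 0 ≤ lowf W δ x :=
  le_min zero_le_one (div_nonneg Metric.infDist_nonneg hδ.le)

lemma lowf_le_one : lowf W δ x ≤ 1 := min_le_left _ _

lemma lowf_zero_mem (hx : x ∈ W) : lowf W δ x = 0 := by
  simp [lowf, Metric.infDist_zero_of_mem hx]

lemma lowf_one (hδ : 0 < δ) (hW : W.Nonempty) (hx : x ∉ Metric.thickening δ W) :
    lowf W δ x = 1 := by
  have hd : δ ≤ Metric.infDist x W := by
    by_contra hlt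
    push_neg at hlt
    obtain ⟨y, hy, hdy⟩ := (Metric.infDist_lt_iff hW).mp hlt
    exact hx (Metric.mem_thickening_iff.mpr ⟨y, hy, hdy⟩)
  have h1 : (1 : ℝ) ≤ Metric.infDist x W / δ := by
    rw [le_div_iff₀ hδ, one_mul]; exact hd
  simp [lowf, min_eq_left h1]

end Urysohn

section IntCompare

variable {m : Measure (LineSpace × LineSpace)} [IsProbabilityMeasure m]

lemma measure_le_integral {E : Set (LineSpace × LineSpace)} (hE : MeasurableSet E)
    {g : (LineSpace × LineSpace) → ℝ} (hg : Integrable g m)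
    (h0 : ∀ x, 0 ≤ g x) (h1 : ∀ x ∈ E, g x = 1) :
    (m E).toReal ≤ ∫ x, g x ∂m := by
  have hi : (m E).toReal = ∫ x, E.indicator (fun _ => (1 : ℝ)) x ∂m := by
    rw [MeasureTheory.integral_indicator hE]
    simp
    rfl
  rw [hi]
  apply MeasureTheory.integral_mono ((integrable_const (1 : ℝ)).indicator hE) hg
  intro x
  by_cases hx : x ∈ E
  · rw [Set.indicator_of_mem hx]
    exact (h1 x hx).ge
  · rw [Set.indicator_of_notMem hx]
    exact h0 x

lemma integral_le_measure {U : Set (LineSpace × LineSpace)} (hU : MeasurableSet U)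
    {g : (LineSpace × LineSpace) → ℝ} (hg : Integrable g m)
    (h1 : ∀ x, g x ≤ 1) (h0 : ∀ x ∉ U, g x = 0) :
    ∫ x, g x ∂m ≤ (m U).toReal := by
  have hi : (m U).toReal = ∫ x, U.indicator (fun _ => (1 : ℝ)) x ∂m := by
    rw [MeasureTheory.integral_indicator hU]
    simp
    rfl
  rw [hi]
  apply MeasureTheory.integral_mono hg ((integrable_const (1 : ℝ)).indicator hU)
  intro x
  by_cases hx : x ∈ U
  · rw [Set.indicator_of_mem hx]
    exact h1 x
  · rw [Set.indicator_of_notMem hx]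
    exact (h0 x hx).le

end IntCompare

end LineAreaAux

open LineAreaAux

/-- **Lemma 11.4 of the paper**: if admissible Borel probability measures `μ n` on the
space of lines of the plane converge weakly to an admissible Borel probability measure
`μ`, then for every compact set `K ⊆ ℝ²` whose topological boundary has `μ`-area zero,
the areas `area_{μ n}(K)` converge to `area_μ(K)`. -/
theorem lineArea_tendsto
    (μ : Measure LineSpace) (μs : ℕ → Measure LineSpace)
    [IsProbabilityMeasure μ] [∀ n, IsProbabilityMeasure (μs n)]
    (hμ : Admissible μ) (hμs : ∀ n, Admissible (μs n))
    (hconv : WeakTendsto μs μ)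
    (K : Set (ℝ × ℝ)) (hK : IsCompact K) (hbd : lineArea μ (frontier K) = 0) :
    Filter.Tendsto (fun n => lineArea (μs n) K) Filter.atTop (nhds (lineArea μ K)) := by
  classical
  suffices hmain : Filter.Tendsto (fun n => (((μs n).prod (μs n)) (pairSet K)).toReal)
      Filter.atTop (nhds (((μ.prod μ) (pairSet K)).toReal)) by
    exact hmain.div_const (8 * π)
  by_cases hSempty : pairSet K = ∅
  · rw [hSempty]
    simp only [measure_empty, ENNReal.toReal_zero]
    exact tendsto_const_nhds
  have hSne : (pairSet K).Nonempty := Set.nonempty_iff_ne_empty.mpr hSempty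
  set S := pairSet K with hSdef
  set E := closure S with hEdef
  have hΛ := isCompact_linesMeeting hK
  have hEcomp : IsCompact E :=
    IsCompact.of_isClosed_subset (hΛ.prod hΛ) isClosed_closure
      (closure_minimal pairSet_subset_prod (hΛ.isClosed.prod hΛ.isClosed))
  have hEne : E.Nonempty := hSne.closure
  set W := (interior S)ᶜ with hWdef
  have hWclosed : IsClosed W := isOpen_interior.isClosed_compl
  have hWne : W.Nonempty := by
    refine ⟨((0, 0), (0, 0)), fun hmem => ?_⟩
    exact (interior_subset hmem).1 rfl
  have hfr : (μ.prod μ) (frontier S) = 0 :=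
    measure_mono_null (frontier_pairSet_subset hK)
      (measure_union_null (prod_Dset_null hμ) (pairSet_null_of_lineArea_zero hbd))
  have hES : (μ.prod μ) E = (μ.prod μ) S := by
    refine le_antisymm ?_ (measure_mono subset_closure)
    calc (μ.prod μ) E ≤ (μ.prod μ) S + (μ.prod μ) (frontier S) := by
          rw [hEdef, closure_eq_self_union_frontier]
          exact measure_union_le _ _
    _ = (μ.prod μ) S := by rw [hfr, add_zero]
  have hIS : (μ.prod μ) (interior S) = (μ.prod μ) S := by
    refine le_antisymm (measure_mono interior_subset) ?_
    calc (μ.prod μ) S ≤ (μ.prod μ) (closure S) := measure_mono subset_closure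
    _ ≤ (μ.prod μ) (interior S) + (μ.prod μ) (frontier S) := by
          rw [closure_eq_interior_union_frontier]
          exact measure_union_le _ _
    _ = (μ.prod μ) (interior S) := by rw [hfr, add_zero]
  set r := ((μ.prod μ) S).toReal with hrdef
  rw [Metric.tendsto_atTop]
  intro ε hε
  set η := ε / 3 with hηdef
  have hη : 0 < η := by positivity
  have hup : ∃ δ > 0, ((μ.prod μ) (Metric.cthickening δ E)).toReal < r + η := by
    have htend := tendsto_measure_cthickening_of_isClosed
      (μ := μ.prod μ) (s := E) ⟨1, one_pos, measure_ne_top _ _⟩ isClosed_closure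
    have htoReal := (ENNReal.tendsto_toReal (measure_ne_top (μ.prod μ) E)).comp htend
    have hlim : ((μ.prod μ) E).toReal = r := by rw [hES]
    rw [hlim] at htoReal
    have hev : ∀ᶠ d in nhds (0 : ℝ),
        ((μ.prod μ) (Metric.cthickening d E)).toReal < r + η :=
      htoReal.eventually_lt_const (lt_add_of_pos_right r hη)
    obtain ⟨ρ, hρ, hball⟩ := Metric.eventually_nhds_iff.mp hev
    refine ⟨ρ / 2, by positivity, hball ?_⟩
    rw [Real.dist_eq, sub_zero, abs_of_pos (by positivity)]
    linarith
  obtain ⟨δ, hδpos, hδup⟩ := hup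
  have hlow : ∃ δ' > 0,
      ((μ.prod μ) (Metric.thickening δ' W)).toReal < ((μ.prod μ) W).toReal + η := by
    have htend := tendsto_measure_thickening_of_isClosed
      (μ := μ.prod μ) (s := W) ⟨1, one_pos, measure_ne_top _ _⟩ hWclosed
    have htoReal := (ENNReal.tendsto_toReal (measure_ne_top (μ.prod μ) W)).comp htend
    have hev := htoReal.eventually_lt_const
      (lt_add_of_pos_right ((μ.prod μ) W).toReal hη)
    obtain ⟨δ', hδ'P, hδ'pos⟩ := (hev.and eventually_mem_nhdsWithin).exists
    exact ⟨δ', hδ'pos, hδ'P⟩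
  obtain ⟨δ', hδ'pos, hδ'low⟩ := hlow
  have hFcs : HasCompactSupport (upf E δ) :=
    HasCompactSupport.intro hEcomp.cthickening fun x hx => upf_zero_outside hδpos hEne hx
  have hGcs : HasCompactSupport (lowf W δ') := by
    apply HasCompactSupport.intro hEcomp
    intro x hx
    apply lowf_zero_mem
    exact fun hmem => hx (subset_closure (interior_subset hmem))
  have hFt := tendsto_integral_prod μ μs hconv (upf E δ) upf_cont hFcs
  have hGt := tendsto_integral_prod μ μs hconv (lowf W δ') lowf_cont hGcs
  obtain ⟨N1, hN1⟩ := Metric.tendsto_atTop.mp hFt η hη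
  obtain ⟨N2, hN2⟩ := Metric.tendsto_atTop.mp hGt η hη
  refine ⟨max N1 N2, fun n hn => ?_⟩
  have hn1 := hN1 n (le_trans (le_max_left _ _) hn)
  have hn2 := hN2 n (le_trans (le_max_right _ _) hn)
  rw [Real.dist_eq] at hn1 hn2 ⊢
  obtain ⟨hn1a, hn1b⟩ := abs_lt.mp hn1
  obtain ⟨hn2a, hn2b⟩ := abs_lt.mp hn2
  set m := (μs n).prod (μs n) with hmdef
  have hEmeas : MeasurableSet E := isClosed_closure.measurableSet
  have hCmeas : MeasurableSet (Metric.cthickening δ E) :=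
    Metric.isClosed_cthickening.measurableSet
  have hImeas : MeasurableSet (interior S) := isOpen_interior.measurableSet
  have hTmeas : MeasurableSet (Metric.thickening δ' W) :=
    Metric.isOpen_thickening.measurableSet
  have hup_n : (m S).toReal ≤ ∫ x, upf E δ x ∂m := by
    have h1 : (m S).toReal ≤ (m E).toReal :=
      ENNReal.toReal_mono (measure_ne_top _ _) (measure_mono subset_closure)
    exact h1.trans (measure_le_integral hEmeas
      (upf_cont.integrable_of_hasCompactSupport hFcs)
      (fun x => upf_nonneg) (fun x hx => upf_one hx))
  have hup_mu : ∫ x, upf E δ x ∂(μ.prod μ) ≤ ((μ.prod μ) (Metric.cthickening δ E)).toReal :=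
    integral_le_measure hCmeas (upf_cont.integrable_of_hasCompactSupport hFcs)
      (fun x => upf_le_one hδpos) (fun x hx => upf_zero_outside hδpos hEne hx)
  have hlow_n : ∫ x, lowf W δ' x ∂m ≤ (m S).toReal := by
    have h2 : (m (interior S)).toReal ≤ (m S).toReal :=
      ENNReal.toReal_mono (measure_ne_top _ _) (measure_mono interior_subset)
    refine le_trans ?_ h2
    apply integral_le_measure hImeas (lowf_cont.integrable_of_hasCompactSupport hGcs)
      (fun x => lowf_le_one)
    intro x hx
    exact lowf_zero_mem hx
  have hlow_mu : ((μ.prod μ) ((Metric.thickening δ' W)ᶜ)).toReal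
      ≤ ∫ x, lowf W δ' x ∂(μ.prod μ) :=
    measure_le_integral hTmeas.compl (lowf_cont.integrable_of_hasCompactSupport hGcs)
      (fun x => lowf_nonneg hδ'pos) (fun x hx => lowf_one hδ'pos hWne hx)
  have harith1 : ((μ.prod μ) W).toReal = 1 - r := by
    have hadd := measure_add_measure_compl (μ := μ.prod μ) hImeas
    rw [measure_univ] at hadd
    have htr := congrArg ENNReal.toReal hadd
    rw [ENNReal.toReal_add (measure_ne_top _ _) (measure_ne_top _ _),
      ENNReal.toReal_one] at htr
    have hISr : ((μ.prod μ) (interior S)).toReal = r := by rw [hIS]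
    rw [hISr] at htr
    linarith
  have harith2 : ((μ.prod μ) ((Metric.thickening δ' W)ᶜ)).toReal
      = 1 - ((μ.prod μ) (Metric.thickening δ' W)).toReal := by
    have hadd := measure_add_measure_compl (μ := μ.prod μ) hTmeas
    rw [measure_univ] at hadd
    have htr := congrArg ENNReal.toReal hadd
    rw [ENNReal.toReal_add (measure_ne_top _ _) (measure_ne_top _ _),
      ENNReal.toReal_one] at htr
    linarith
  rw [abs_lt]
  constructor
  · -- lower bound : r - ε < (m S).toReal
    have hchain : r - 2 * η < (m S).toReal := by
      have h3 : r - η < ((μ.prod μ) ((Metric.thickening δ' W)ᶜ)).toReal := by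
        rw [harith2]
        linarith
      have h4 : r - η ≤ ∫ x, lowf W δ' x ∂(μ.prod μ) := le_trans h3.le hlow_mu
      have h5 : r - 2 * η < ∫ x, lowf W δ' x ∂m := by linarith
      linarith
    have : 2 * η < ε := by rw [hηdef]; linarith
    linarith
  · -- upper bound : (m S).toReal - r < ε
    have hchain : (m S).toReal < r + 2 * η := by
      have h3 : ∫ x, upf E δ x ∂m < ∫ x, upf E δ x ∂(μ.prod μ) + η := by linarith
      linarith
    have : 2 * η < ε := by rw [hηdef]; linarith
    linarith
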